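/- Let β0, β1, β2 be real numbers. Then the saturation condition 2/min{w1,w2,w3,w4} ≥ 1/w1 + 1/w2 + 1/w3 + 1/w4 holds if and only if β0 ≠ 0, |β1| > (1/2)·log((e^{2|β0|}+1)/(e^{2|β0|}−1)), and |β2| ≥ log( (2·e^{|β0|+|β1|} + √((e^{4|β0|}−1)(e^{4|β1|}−1))) / ((e^{2|β0|}−1)(e^{2|β1|}−1) − 2) ). -/

import Mathlib

private noncomputable def auxG (t : ℝ) : ℝ := 2 + Real.exp t + (Real.exp t)⁻¹

private lemma auxG_def (t : ℝ) : auxG t = 2 + Real.exp t + (Real.exp t)⁻¹ := rfl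

private lemma auxG_pos (t : ℝ) : 0 < auxG t := by
  have := Real.exp_pos t
  rw [auxG_def]
  positivity

private lemma auxe_abs (t : ℝ) :
    Real.exp |t| + (Real.exp |t|)⁻¹ = Real.exp t + (Real.exp t)⁻¹ := by
  rcases abs_cases t with ⟨h, _⟩ | ⟨h, _⟩
  · rw [h]
  · rw [h, Real.exp_neg, inv_inv]; ring

private lemma auxG_abs (t : ℝ) : auxG |t| = auxG t := by
  have h := auxe_abs t
  rw [auxG_def, auxG_def]
  linarith

private lemma auxG_mono {t s : ℝ} (h : |t| ≤ s) : auxG t ≤ auxG s := by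
  rw [← auxG_abs t, auxG_def, auxG_def]
  have h1 : (1:ℝ) ≤ Real.exp |t| := Real.one_le_exp (abs_nonneg t)
  have h2 : Real.exp |t| ≤ Real.exp s := Real.exp_le_exp.2 h
  set a := Real.exp |t| with ha'
  set b := Real.exp s with hb'
  have ha : 0 < a := lt_of_lt_of_le one_pos h1
  have hb : 0 < b := lt_of_lt_of_le ha h2
  have key : a⁻¹ - b⁻¹ = (b - a) / (a * b) := by field_simp
  have hab : (1:ℝ) ≤ a * b := one_le_mul_of_one_le_of_one_le h1 (le_trans h1 h2)
  have hle : (b - a) / (a * b) ≤ b - a := div_le_self (by linarith) hab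
  linarith [key, hle]

private lemma auxw_eq (t : ℝ) :
    Real.exp t / (1 + Real.exp t) ^ 2 = 1 / auxG t := by
  have h1 : Real.exp t ≠ 0 := (Real.exp_pos t).ne'
  have h2 : (1 + Real.exp t) ≠ 0 := by positivity
  have h3 : auxG t ≠ 0 := (auxG_pos t).ne'
  rw [auxG_def] at h3 ⊢
  field_simp
  ring

private lemma auxw_pos (t : ℝ) : 0 < Real.exp t / (1 + Real.exp t) ^ 2 := by
  have := Real.exp_pos t
  positivity

private lemma aux_max_abs (x c : ℝ) : |x| + |c| ≤ max |x + c| |x - c| := by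
  rcases le_total 0 x with hx | hx <;> rcases le_total 0 c with hc | hc
  · exact le_max_of_le_left (by rw [abs_of_nonneg hx, abs_of_nonneg hc,
      abs_of_nonneg (by linarith)])
  · refine le_max_of_le_right ?_
    rw [abs_of_nonneg hx, abs_of_nonpos hc, abs_of_nonneg (by linarith)]
    linarith
  · refine le_max_of_le_right ?_
    rw [abs_of_nonpos hx, abs_of_nonneg hc, abs_of_nonpos (by linarith)]
    linarith
  · refine le_max_of_le_left ?_
    rw [abs_of_nonpos hx, abs_of_nonpos hc, abs_of_nonpos (by linarith)]
    linarith

set_option maxHeartbeats 1000000 in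
private lemma aux_core (p q r s d : ℝ) (hp : 1 ≤ p) (hq : 1 ≤ q) (hr : 1 ≤ r)
    (hs0 : 0 ≤ s) (hs2 : s^2 = (p^4-1) * (q^4-1))
    (hd : d = (p^2-1) * (q^2-1) - 2) :
    2 * (p*q*r)^2 + 2 ≥ 4 * (p*q*r) + (p^2+1) * (q^2+1) * (r^2+1) ↔
    (0 < d ∧ 2*p*q + s ≤ r * d) := by
  have hp2 : (1:ℝ) ≤ p^2 := by nlinarith
  have hq2' : (1:ℝ) ≤ q^2 := by nlinarith
  have hfac : s^2 - (2*p*q - d)^2 = 2*d*(p+q)^2 := by rw [hs2, hd]; ring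
  have hid : d*(d*r^2 - 4*p*q*r - ((p^2+1)*(q^2+1)-2)) = (d*r - 2*p*q)^2 - s^2 := by
    rw [hs2, hd]; ring
  have hring : 2 * (p*q*r)^2 + 2 - (4 * (p*q*r) + (p^2+1) * (q^2+1) * (r^2+1))
      = d*r^2 - 4*p*q*r - ((p^2+1)*(q^2+1)-2) := by rw [hd]; ring
  have hr2 : (1:ℝ) ≤ r^2 := by nlinarith
  have hE : (2:ℝ) ≤ (p^2+1)*(q^2+1)-2 := by nlinarith
  have hpq : (1:ℝ) ≤ p*q := by nlinarith
  have hpqr : (1:ℝ) ≤ p*q*r := by nlinarith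
  have hpq2 : (0:ℝ) < (p+q)^2 := by positivity
  constructor
  · intro H
    have hq2 : 0 ≤ d*r^2 - 4*p*q*r - ((p^2+1)*(q^2+1)-2) := by
      rw [← hring]; linarith
    have hd0 : 0 < d := by
      by_contra hdn
      push_neg at hdn
      have hneg : d * r^2 ≤ 0 := mul_nonpos_of_nonpos_of_nonneg hdn (sq_nonneg r)
      linarith
    refine ⟨hd0, ?_⟩
    by_contra hcon
    push_neg at hcon
    have h1 : s^2 ≤ (d*r - 2*p*q)^2 := by
      have := mul_nonneg hd0.le hq2
      linarith [hid]
    have h2 : 2*p*q - d < s := by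
      have hsq : (2*p*q - d)^2 < s^2 := by
        have := mul_pos hd0 hpq2
        linarith
      exact lt_of_pow_lt_pow_left₀ 2 hs0 hsq
    have h3 : d ≤ d*r := le_mul_of_one_le_right hd0.le hr
    nlinarith [h1, h2, h3, hcon, hs0]
  · rintro ⟨hd0, hge⟩
    have h1 : s ≤ d*r - 2*p*q := by linarith
    have h2 : 0 ≤ d*r - 2*p*q := le_trans hs0 h1
    have h3 : s^2 ≤ (d*r - 2*p*q)^2 := by
      have := pow_le_pow_left₀ hs0 h1 2
      simpa using this
    have h4 : 0 ≤ d*(d*r^2 - 4*p*q*r - ((p^2+1)*(q^2+1)-2)) := by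
      rw [hid]; linarith
    have h5 : 0 ≤ d*r^2 - 4*p*q*r - ((p^2+1)*(q^2+1)-2) :=
      (mul_nonneg_iff_of_pos_left hd0).mp h4
    linarith [hring]

private lemma aux_knn {p q : ℝ} (hp : 1 ≤ p) (hq : 1 ≤ q) :
    (0:ℝ) ≤ (p^4-1) * (q^4-1) := by
  have hp4 : (1:ℝ) ≤ p^4 := one_le_pow₀ hp
  have hq4 : (1:ℝ) ≤ q^4 := one_le_pow₀ hq
  exact mul_nonneg (by linarith) (by linarith)

private lemma aux_hsum {p q s : ℝ} (hp : 1 ≤ p) (hq : 1 ≤ q) (hs : 0 ≤ s) :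
    (0:ℝ) < 2*(p*q) + s := by nlinarith

private lemma aux_psq {p q : ℝ} (hq : 1 ≤ q) (hd : 0 < (p^2-1) * (q^2-1) - 2) :
    1 < p^2 := by nlinarith

private lemma aux_lt1 {p q : ℝ} (hden : 0 < p^2 - 1)
    (hd : 0 < (p^2-1) * (q^2-1) - 2) : p^2 + 1 < q^2 * (p^2-1) := by nlinarith

private lemma aux_lt2 {p q : ℝ} (hden : 0 < p^2 - 1)
    (h : p^2 + 1 < q^2 * (p^2-1)) : 0 < (p^2-1) * (q^2-1) - 2 := by nlinarith

set_option maxHeartbeats 2000000 in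
/-- For the logit link with linear predictors `ηi` and weights
`wi = e^{ηi}/(1+e^{ηi})²`, the saturation condition
`2/min{w1,w2,w3,w4} ≥ 1/w1 + 1/w2 + 1/w3 + 1/w4` holds iff `β0 ≠ 0`,
`|β1| > (1/2)·log((e^{2|β0|}+1)/(e^{2|β0|}-1))`, and
`|β2| ≥ log((2·e^{|β0|+|β1|} + √((e^{4|β0|}-1)(e^{4|β1|}-1)))
            /((e^{2|β0|}-1)(e^{2|β1|}-1)-2))`. -/
theorem stmt9 (β0 β1 β2 η1 η2 η3 η4 w1 w2 w3 w4 : ℝ)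
    (hη1 : η1 = β0 + β1 + β2) (hη2 : η2 = β0 + β1 - β2)
    (hη3 : η3 = β0 - β1 + β2) (hη4 : η4 = β0 - β1 - β2)
    (hw1 : w1 = Real.exp η1 / (1 + Real.exp η1) ^ 2)
    (hw2 : w2 = Real.exp η2 / (1 + Real.exp η2) ^ 2)
    (hw3 : w3 = Real.exp η3 / (1 + Real.exp η3) ^ 2)
    (hw4 : w4 = Real.exp η4 / (1 + Real.exp η4) ^ 2) :
    2 / min (min w1 w2) (min w3 w4) ≥ 1 / w1 + 1 / w2 + 1 / w3 + 1 / w4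
    ↔ (β0 ≠ 0 ∧
       |β1| > (1/2) * Real.log ((Real.exp (2 * |β0|) + 1)
         / (Real.exp (2 * |β0|) - 1)) ∧
       |β2| ≥ Real.log ((2 * Real.exp (|β0| + |β1|)
           + Real.sqrt ((Real.exp (4 * |β0|) - 1) * (Real.exp (4 * |β1|) - 1)))
         / ((Real.exp (2 * |β0|) - 1) * (Real.exp (2 * |β1|) - 1) - 2))) := by
  obtain ⟨p, hpdef⟩ : ∃ p, Real.exp |β0| = p := ⟨_, rfl⟩
  obtain ⟨q, hqdef⟩ : ∃ q, Real.exp |β1| = q := ⟨_, rfl⟩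
  obtain ⟨r, hrdef⟩ : ∃ r, Real.exp |β2| = r := ⟨_, rfl⟩
  have hp1 : 1 ≤ p := hpdef ▸ Real.one_le_exp (abs_nonneg β0)
  have hq1 : 1 ≤ q := hqdef ▸ Real.one_le_exp (abs_nonneg β1)
  have hr1 : 1 ≤ r := hrdef ▸ Real.one_le_exp (abs_nonneg β2)
  have hp0 : (0:ℝ) < p := lt_of_lt_of_le one_pos hp1
  have hq0 : (0:ℝ) < q := lt_of_lt_of_le one_pos hq1
  have hr0 : (0:ℝ) < r := lt_of_lt_of_le one_pos hr1
  -- exp conversions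
  have h2a : Real.exp (2 * |β0|) = p^2 := by
    rw [two_mul, Real.exp_add, hpdef]; ring
  have h2b : Real.exp (2 * |β1|) = q^2 := by
    rw [two_mul, Real.exp_add, hqdef]; ring
  have h4a : Real.exp (4 * |β0|) = p^4 := by
    rw [show (4:ℝ) * |β0| = 2*|β0| + 2*|β0| by ring, Real.exp_add, h2a]; ring
  have h4b : Real.exp (4 * |β1|) = q^4 := by
    rw [show (4:ℝ) * |β1| = 2*|β1| + 2*|β1| by ring, Real.exp_add, h2b]; ring
  have hab : Real.exp (|β0| + |β1|) = p * q := by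
    rw [Real.exp_add, hpdef, hqdef]
  -- weights
  have hweq1 : w1 = 1 / auxG η1 := by rw [hw1, auxw_eq]
  have hweq2 : w2 = 1 / auxG η2 := by rw [hw2, auxw_eq]
  have hweq3 : w3 = 1 / auxG η3 := by rw [hw3, auxw_eq]
  have hweq4 : w4 = 1 / auxG η4 := by rw [hw4, auxw_eq]
  have hSnn : 0 ≤ |β0| + |β1| + |β2| := by positivity
  -- |ηi| ≤ S
  have hb1 : |η1| ≤ |β0| + |β1| + |β2| := by
    rw [hη1]
    exact (abs_add_le _ _).trans (add_le_add_left (abs_add_le _ _) _)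
  have hb2 : |η2| ≤ |β0| + |β1| + |β2| := by
    rw [hη2]
    exact (abs_sub _ _).trans (add_le_add_left (abs_add_le _ _) _)
  have hb3 : |η3| ≤ |β0| + |β1| + |β2| := by
    rw [hη3]
    exact (abs_add_le _ _).trans (add_le_add_left (abs_sub _ _) _)
  have hb4 : |η4| ≤ |β0| + |β1| + |β2| := by
    rw [hη4]
    exact (abs_sub _ _).trans (add_le_add_left (abs_sub _ _) _)
  have hG1 : auxG η1 ≤ auxG (|β0| + |β1| + |β2|) := auxG_mono hb1
  have hG2 : auxG η2 ≤ auxG (|β0| + |β1| + |β2|) := auxG_mono hb2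
  have hG3 : auxG η3 ≤ auxG (|β0| + |β1| + |β2|) := auxG_mono hb3
  have hG4 : auxG η4 ≤ auxG (|β0| + |β1| + |β2|) := auxG_mono hb4
  -- max of |ηi| ≥ S
  have hSmax : |β0| + |β1| + |β2| ≤ max (max |η1| |η2|) (max |η3| |η4|) := by
    rw [hη1, hη2, hη3, hη4]
    have k1 : |β0 + β1| + |β2| ≤ max |β0 + β1 + β2| |β0 + β1 - β2| :=
      aux_max_abs (β0 + β1) β2
    have k2 : |β0 - β1| + |β2| ≤ max |β0 - β1 + β2| |β0 - β1 - β2| :=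
      aux_max_abs (β0 - β1) β2
    have k3 : |β0| + |β1| ≤ max |β0 + β1| |β0 - β1| := aux_max_abs β0 β1
    calc |β0| + |β1| + |β2| ≤ max |β0 + β1| |β0 - β1| + |β2| := add_le_add_left k3 _
      _ = max (|β0 + β1| + |β2|) (|β0 - β1| + |β2|) := (max_add_add_right _ _ _).symm
      _ ≤ _ := max_le_max k1 k2
  have hGmax : auxG (|β0| + |β1| + |β2|) ≤ max (max (auxG η1) (auxG η2)) (max (auxG η3) (auxG η4)) := by
    have key : ∀ t : ℝ, |β0| + |β1| + |β2| ≤ |t| → auxG (|β0| + |β1| + |β2|) ≤ auxG t := by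
      intro t ht
      rw [← auxG_abs t]
      exact auxG_mono (by rwa [abs_of_nonneg hSnn])
    rcases le_max_iff.1 hSmax with h | h <;> rcases le_max_iff.1 h with h' | h'
    · exact le_max_of_le_left (le_max_of_le_left (key _ h'))
    · exact le_max_of_le_left (le_max_of_le_right (key _ h'))
    · exact le_max_of_le_right (le_max_of_le_left (key _ h'))
    · exact le_max_of_le_right (le_max_of_le_right (key _ h'))
  -- min of the weights
  have hmin : min (min w1 w2) (min w3 w4) = 1 / auxG (|β0| + |β1| + |β2|) := by
    apply le_antisymm
    · rcases le_max_iff.1 hGmax with h | h <;> rcases le_max_iff.1 h with h' | h'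
      · have he : auxG η1 = auxG (|β0| + |β1| + |β2|) := le_antisymm hG1 h'
        calc min (min w1 w2) (min w3 w4) ≤ w1 := (min_le_left _ _).trans (min_le_left _ _)
          _ = _ := by rw [hweq1, he]
      · have he : auxG η2 = auxG (|β0| + |β1| + |β2|) := le_antisymm hG2 h'
        calc min (min w1 w2) (min w3 w4) ≤ w2 := (min_le_left _ _).trans (min_le_right _ _)
          _ = _ := by rw [hweq2, he]
      · have he : auxG η3 = auxG (|β0| + |β1| + |β2|) := le_antisymm hG3 h'
        calc min (min w1 w2) (min w3 w4) ≤ w3 := (min_le_right _ _).trans (min_le_left _ _)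
          _ = _ := by rw [hweq3, he]
      · have he : auxG η4 = auxG (|β0| + |β1| + |β2|) := le_antisymm hG4 h'
        calc min (min w1 w2) (min w3 w4) ≤ w4 := (min_le_right _ _).trans (min_le_right _ _)
          _ = _ := by rw [hweq4, he]
    · refine le_min (le_min ?_ ?_) (le_min ?_ ?_)
      · rw [hweq1]; exact one_div_le_one_div_of_le (auxG_pos η1) hG1
      · rw [hweq2]; exact one_div_le_one_div_of_le (auxG_pos η2) hG2
      · rw [hweq3]; exact one_div_le_one_div_of_le (auxG_pos η3) hG3
      · rw [hweq4]; exact one_div_le_one_div_of_le (auxG_pos η4) hG4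
  have hGS : auxG (|β0| + |β1| + |β2|) = 2 + p*q*r + (p*q*r)⁻¹ := by
    rw [auxG_def, Real.exp_add, Real.exp_add, hpdef, hqdef, hrdef]
  have hxp : Real.exp β0 + (Real.exp β0)⁻¹ = p + p⁻¹ := by rw [← auxe_abs β0, hpdef]
  have hyp : Real.exp β1 + (Real.exp β1)⁻¹ = q + q⁻¹ := by rw [← auxe_abs β1, hqdef]
  have hzp : Real.exp β2 + (Real.exp β2)⁻¹ = r + r⁻¹ := by rw [← auxe_abs β2, hrdef]
  have hsumeq : auxG η1 + auxG η2 + auxG η3 + auxG η4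
      = 8 + (p + p⁻¹) * (q + q⁻¹) * (r + r⁻¹) := by
    rw [← hxp, ← hyp, ← hzp, hη1, hη2, hη3, hη4]
    simp only [auxG_def, Real.exp_add, Real.exp_sub]
    have hx0 := Real.exp_ne_zero β0
    have hy0 := Real.exp_ne_zero β1
    have hz0 := Real.exp_ne_zero β2
    field_simp
    ring
  have hP : (0:ℝ) < p*q*r := by positivity
  -- transform LHS to polynomial inequality
  have L1 : (2 / min (min w1 w2) (min w3 w4) ≥ 1 / w1 + 1 / w2 + 1 / w3 + 1 / w4)
      ↔ 2 * (p*q*r)^2 + 2 ≥ 4 * (p*q*r) + (p^2+1) * (q^2+1) * (r^2+1) := by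
    rw [hmin, hweq1, hweq2, hweq3, hweq4, one_div_one_div, one_div_one_div,
      one_div_one_div, one_div_one_div, div_div_eq_mul_div, div_one, hGS, hsumeq]
    have eA : (2 * (2 + p*q*r + (p*q*r)⁻¹)) * (p*q*r)
        = 4*(p*q*r) + 2*(p*q*r)^2 + 2 := by field_simp; ring
    have eB : (8 + (p + p⁻¹) * (q + q⁻¹) * (r + r⁻¹)) * (p*q*r)
        = 8*(p*q*r) + (p^2+1) * (q^2+1) * (r^2+1) := by field_simp
    constructor
    · intro h
      have h' := mul_le_mul_of_nonneg_right h hP.le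
      rw [eA, eB] at h'
      linarith
    · intro h
      have h' : (8 + (p + p⁻¹) * (q + q⁻¹) * (r + r⁻¹)) * (p*q*r)
          ≤ (2 * (2 + p*q*r + (p*q*r)⁻¹)) * (p*q*r) := by
        rw [eA, eB]; linarith
      exact le_of_mul_le_mul_right h' hP
  have hKnn : (0:ℝ) ≤ (p^4-1) * (q^4-1) := aux_knn hp1 hq1
  have hs0 : 0 ≤ Real.sqrt ((p^4-1) * (q^4-1)) := Real.sqrt_nonneg _
  have hs2 : Real.sqrt ((p^4-1) * (q^4-1)) ^ 2 = (p^4-1) * (q^4-1) := Real.sq_sqrt hKnn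
  rw [L1, h4a, h4b, h2a, h2b, hab,
    aux_core p q r (Real.sqrt ((p^4-1) * (q^4-1))) ((p^2-1) * (q^2-1) - 2)
      hp1 hq1 hr1 hs0 hs2 rfl]
  -- final translation of the right-hand side
  have hsum' : (0:ℝ) < 2*(p*q) + Real.sqrt ((p^4-1) * (q^4-1)) := aux_hsum hp1 hq1 hs0
  constructor
  · rintro ⟨hd0, hle⟩
    have hpgt : 1 < p^2 := aux_psq hq1 hd0
    have hden : (0:ℝ) < p^2 - 1 := by linarith
    refine ⟨?_, ?_, ?_⟩
    · intro h0
      rw [h0, abs_zero, Real.exp_zero] at hpdef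
      rw [← hpdef] at hpgt
      norm_num at hpgt
    · have harg : (0:ℝ) < (p^2+1)/(p^2-1) := by positivity
      have hlt : (p^2+1)/(p^2-1) < q^2 := by
        rw [div_lt_iff₀ hden]; exact aux_lt1 hden hd0
      have hlog : Real.log ((p^2+1)/(p^2-1)) < 2 * |β1| :=
        (Real.log_lt_iff_lt_exp harg).2 (by rw [h2b]; exact hlt)
      rw [gt_iff_lt]
      linarith
    · have hdiv : (0:ℝ) < (2*(p*q) + Real.sqrt ((p^4-1) * (q^4-1)))
          / ((p^2-1) * (q^2-1) - 2) := div_pos hsum' hd0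
      rw [ge_iff_le, Real.log_le_iff_le_exp hdiv, hrdef, div_le_iff₀ hd0]
      linarith [hle]
  · rintro ⟨h0, hB, hC⟩
    have habs : 0 < |β0| := abs_pos.2 h0
    have hpgt : 1 < p := by
      rw [← hpdef]
      calc (1:ℝ) = Real.exp 0 := Real.exp_zero.symm
        _ < Real.exp |β0| := Real.exp_lt_exp.2 habs
    have hden : (0:ℝ) < p^2 - 1 := by
      have h2 : 1 < p^2 := one_lt_pow₀ hpgt (by norm_num)
      linarith
    have harg : (0:ℝ) < (p^2+1)/(p^2-1) := by positivity
    have hlog : Real.log ((p^2+1)/(p^2-1)) < 2 * |β1| := by linarith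
    have hlt : (p^2+1)/(p^2-1) < q^2 := by
      have := (Real.log_lt_iff_lt_exp harg).1 hlog
      rwa [h2b] at this
    have hd0 : (0:ℝ) < (p^2-1) * (q^2-1) - 2 :=
      aux_lt2 hden ((div_lt_iff₀ hden).1 hlt)
    have hdiv : (0:ℝ) < (2*(p*q) + Real.sqrt ((p^4-1) * (q^4-1)))
        / ((p^2-1) * (q^2-1) - 2) := div_pos hsum' hd0
    rw [ge_iff_le, Real.log_le_iff_le_exp hdiv, hrdef, div_le_iff₀ hd0] at hC
    exact ⟨hd0, by linarith [hC]⟩
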